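/- Let V : ℝⁿ → ℝ ∪ {+∞} be proper lsc and x₀ ∈ dom V. Suppose x : [0,∞) → ℝⁿ is continuous with x(0) = x₀, right-differentiable at 0 with derivative d ∈ ℝⁿ, and e^{at}V(x(t)) + ∫₀ᵗ W(x(τ))dτ ≤ V(x₀) for all t ≥ 0, where W : ℝⁿ → [0,+∞] is lsc and a ≥ 0. Then the contingent directional derivative satisfies V′(x₀; d) ≤ −aV(x₀) − W(x₀); consequently σ_{∂_F V(x₀)}(d) ≤ −aV(x₀) − W(x₀). -/

import Mathlib

open Filter Topology MeasureTheory
open scoped RealInnerProductSpace ENNReal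

variable {n : ℕ}

/-- Fréchet subdifferential of an extended-real-valued function. -/
def frechetSubdiffE (φ : EuclideanSpace ℝ (Fin n) → EReal) (x : EuclideanSpace ℝ (Fin n)) :
    Set (EuclideanSpace ℝ (Fin n)) :=
  {ξ | ∀ ε > (0 : ℝ), ∃ δ > (0 : ℝ), ∀ y, ‖y - x‖ ≤ δ →
    φ x + ((⟪ξ, y - x⟫ - ε * ‖y - x‖ : ℝ) : EReal) ≤ φ y}

/-- The contingent directional derivative
`φ′(x;v) := liminf_{t→0⁺, w→v} (φ(x+tw) − φ(x))/t`. -/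
noncomputable def contingentDeriv (φ : EuclideanSpace ℝ (Fin n) → EReal)
    (x v : EuclideanSpace ℝ (Fin n)) : EReal :=
  Filter.liminf (fun p : ℝ × EuclideanSpace ℝ (Fin n) =>
      ((p.1⁻¹ : ℝ) : EReal) * (φ (x + p.1 • p.2) - φ x))
    ((𝓝[>] (0 : ℝ)) ×ˢ 𝓝 v)

private lemma liminf_map_comp {α β γ : Type*} [CompleteLattice γ] (m : α → β) (F : Filter α)
    (u : β → γ) : Filter.liminf u (Filter.map m F) = Filter.liminf (u ∘ m) F := by
  unfold Filter.liminf
  rw [Filter.map_map]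

/-- If a trajectory `x(·)` starting at `x₀ ∈ dom V`, right-differentiable at `0` with
derivative `d`, satisfies `e^{at}V(x(t)) + ∫₀ᵗ W(x(τ))dτ ≤ V(x₀)` for all `t ≥ 0`, then
`V′(x₀; d) ≤ −aV(x₀) − W(x₀)` and `σ_{∂_F V(x₀)}(d) ≤ −aV(x₀) − W(x₀)`. -/
theorem stmt15 (V : EuclideanSpace ℝ (Fin n) → EReal) (hlsc : LowerSemicontinuous V)
    (hbot : ∀ u, V u ≠ ⊥) (x₀ : EuclideanSpace ℝ (Fin n)) (hdom : V x₀ ≠ ⊤)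
    (W : EuclideanSpace ℝ (Fin n) → ℝ≥0∞) (hW : LowerSemicontinuous W)
    (a : ℝ) (ha : 0 ≤ a)
    (x : ℝ → EuclideanSpace ℝ (Fin n)) (hx : Continuous x) (hx0 : x 0 = x₀)
    (d : EuclideanSpace ℝ (Fin n)) (hd : HasDerivWithinAt x d (Set.Ici 0) 0)
    (hlyap : ∀ t : ℝ, 0 ≤ t →
      (Real.exp (a * t) : EReal) * V (x t)
        + ((∫⁻ τ in Set.Ioc 0 t, W (x τ)) : ℝ≥0∞) ≤ V x₀) :
    contingentDeriv V x₀ d ≤ -((a : EReal) * V x₀) - ((W x₀ : ℝ≥0∞) : EReal) ∧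
    (⨆ ξ ∈ frechetSubdiffE V x₀, ((⟪ξ, d⟫ : ℝ) : EReal)) ≤
      -((a : EReal) * V x₀) - ((W x₀ : ℝ≥0∞) : EReal) := by
  obtain ⟨v₀, hv₀⟩ : ∃ r : ℝ, V x₀ = (r : EReal) :=
    ⟨(V x₀).toReal, (EReal.coe_toReal hdom (hbot x₀)).symm⟩
  set L := contingentDeriv V x₀ d with hL
  -- finiteness of V along the trajectory
  have hVt : ∀ t : ℝ, 0 ≤ t → V (x t) ≠ ⊤ := by
    intro t ht hT
    have h1 := hlyap t ht
    rw [hT, EReal.mul_top_of_pos (by exact_mod_cast Real.exp_pos (a * t)),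
      EReal.top_add_of_ne_bot (EReal.coe_ennreal_ne_bot _)] at h1
    exact hdom (top_le_iff.mp h1)
  set v : ℝ → ℝ := fun t => (V (x t)).toReal with hv
  have hVt' : ∀ t : ℝ, 0 ≤ t → V (x t) = ((v t : ℝ) : EReal) := fun t ht =>
    (EReal.coe_toReal (hVt t ht) (hbot _)).symm
  -- the key estimate for every admissible real lower bound `c` on `W x₀`
  have key : ∀ c : ℝ, (c ≤ 0 ∨ ENNReal.ofReal c < W x₀) →
      L ≤ ((-(a * v₀) - c : ℝ) : EReal) := by
    intro c hc
    -- eventual real inequality along the trajectory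
    have hIt : ∀ᶠ t in 𝓝[>] (0 : ℝ), Real.exp (a * t) * v t + c * t ≤ v₀ := by
      have hev : ∀ᶠ t in 𝓝[>] (0 : ℝ),
          ((c * t : ℝ) : EReal) ≤ ((∫⁻ τ in Set.Ioc 0 t, W (x τ) : ℝ≥0∞) : EReal) := by
        rcases le_or_gt c 0 with hc0 | hc0
        · filter_upwards [self_mem_nhdsWithin] with t ht
          refine le_trans ?_ (EReal.coe_ennreal_nonneg _)
          exact_mod_cast mul_nonpos_of_nonpos_of_nonneg hc0 (le_of_lt ht)
        · have hcW : ENNReal.ofReal c < W x₀ := hc.resolve_left (not_le.mpr hc0)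
          have h3 : ∀ᶠ τ in 𝓝 (0 : ℝ), ENNReal.ofReal c < W (x τ) :=
            (hx0 ▸ hx.tendsto 0).eventually (hW x₀ _ hcW)
          obtain ⟨δ, hδ, hball⟩ := Metric.eventually_nhds_iff.mp h3
          filter_upwards [Ioo_mem_nhdsGT_of_mem ⟨le_refl (0 : ℝ), hδ⟩] with t ht
          have hint : ENNReal.ofReal (c * t) ≤ ∫⁻ τ in Set.Ioc 0 t, W (x τ) := by
            have h4 : ∀ τ ∈ Set.Ioc (0 : ℝ) t, ENNReal.ofReal c ≤ W (x τ) := by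
              intro τ hτ
              refine (hball ?_).le
              rw [Real.dist_eq, sub_zero, abs_of_pos hτ.1]
              exact lt_of_le_of_lt hτ.2 ht.2
            calc ENNReal.ofReal (c * t)
                = ENNReal.ofReal c * ENNReal.ofReal t := ENNReal.ofReal_mul hc0.le
              _ = ENNReal.ofReal c * volume (Set.Ioc (0 : ℝ) t) := by
                  rw [Real.volume_Ioc, sub_zero]
              _ = ∫⁻ _ in Set.Ioc (0 : ℝ) t, ENNReal.ofReal c := (setLIntegral_const _ _).symm
              _ ≤ ∫⁻ τ in Set.Ioc 0 t, W (x τ) :=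
                  setLIntegral_mono' measurableSet_Ioc h4
          calc ((c * t : ℝ) : EReal) ≤ ((ENNReal.ofReal (c * t) : ℝ≥0∞) : EReal) := by
                rw [EReal.coe_ennreal_ofReal]
                exact_mod_cast le_max_left _ _
            _ ≤ _ := EReal.coe_ennreal_le_coe_ennreal_iff.mpr hint
      filter_upwards [hev, self_mem_nhdsWithin] with t hev' ht
      have ht' : (0 : ℝ) < t := ht
      have h1 := hlyap t ht'.le
      rw [hVt' t ht'.le, hv₀] at h1
      have h2 : (Real.exp (a * t) : EReal) * ((v t : ℝ) : EReal) + ((c * t : ℝ) : EReal)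
          ≤ ((v₀ : ℝ) : EReal) := le_trans (add_le_add_right hev' _) h1
      rw [← EReal.coe_mul, ← EReal.coe_add, EReal.coe_le_coe_iff] at h2
      exact h2
    -- the comparison curve and its limit
    set G : ℝ → ℝ := fun t => (t⁻¹ * (Real.exp (-(a * t)) - 1)) * v₀ - Real.exp (-(a * t)) * c
      with hG
    have hexp : Tendsto (fun t : ℝ => Real.exp (-(a * t))) (𝓝[>] (0 : ℝ)) (𝓝 1) := by
      have hcont : Continuous fun t : ℝ => Real.exp (-(a * t)) :=
        Real.continuous_exp.comp ((continuous_const.mul continuous_id).neg)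
      have := (hcont.tendsto 0).mono_left (nhdsWithin_le_nhds (s := Set.Ioi (0 : ℝ)))
      simpa using this
    have hslope : Tendsto (fun t : ℝ => t⁻¹ * (Real.exp (-(a * t)) - 1)) (𝓝[>] (0 : ℝ))
        (𝓝 (-a)) := by
      have hder : HasDerivAt (fun t : ℝ => Real.exp (-(a * t))) (-a) 0 := by
        have h := (((hasDerivAt_id (0 : ℝ)).const_mul a).neg).exp
        simpa using h
      rw [hasDerivAt_iff_tendsto_slope] at hder
      have hmono : 𝓝[>] (0 : ℝ) ≤ 𝓝[≠] (0 : ℝ) :=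
        nhdsWithin_mono 0 fun y hy => Set.mem_compl_singleton_iff.mpr (ne_of_gt hy)
      refine (hder.mono_left hmono).congr' ?_
      filter_upwards [self_mem_nhdsWithin] with t ht
      have ht' : (0 : ℝ) < t := ht
      rw [slope_def_field]
      simp [div_eq_inv_mul]
    have hGlim : Tendsto G (𝓝[>] (0 : ℝ)) (𝓝 (-(a * v₀) - c)) := by
      have := (hslope.mul_const v₀).sub (hexp.mul_const c)
      simpa [hG] using this
    -- reduce the liminf to the trajectory
    set u : ℝ × EuclideanSpace ℝ (Fin n) → EReal := fun p =>
      ((p.1⁻¹ : ℝ) : EReal) * (V (x₀ + p.1 • p.2) - V x₀) with hu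
    set m : ℝ → ℝ × EuclideanSpace ℝ (Fin n) := fun t => (t, t⁻¹ • (x t - x 0)) with hm
    have hslopeX : Tendsto (fun t : ℝ => t⁻¹ • (x t - x 0)) (𝓝[>] (0 : ℝ)) (𝓝 d) := by
      rw [hasDerivWithinAt_iff_tendsto_slope, Set.Ici_sdiff_left] at hd
      refine hd.congr fun t => ?_
      rw [slope_def_module, sub_zero]
    have hmt : Tendsto m (𝓝[>] (0 : ℝ)) ((𝓝[>] (0 : ℝ)) ×ˢ 𝓝 d) :=
      Tendsto.prodMk tendsto_id hslopeX
    have hub : ∀ᶠ t in 𝓝[>] (0 : ℝ), (u ∘ m) t ≤ ((G t : ℝ) : EReal) := by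
      filter_upwards [hIt, self_mem_nhdsWithin] with t hineq ht
      have ht' : (0 : ℝ) < t := ht
      have hxt : x₀ + t • (t⁻¹ • (x t - x 0)) = x t := by
        rw [smul_smul, mul_inv_cancel₀ ht'.ne', one_smul, hx0, add_sub_cancel]
      have humt : (u ∘ m) t = ((t⁻¹ * (v t - v₀) : ℝ) : EReal) := by
        simp only [Function.comp, hu, hm, hxt]
        rw [hVt' t ht'.le, hv₀, ← EReal.coe_sub, ← EReal.coe_mul]
      rw [humt, EReal.coe_le_coe_iff]
      -- real computation
      have hE : Real.exp (-(a * t)) * Real.exp (a * t) = 1 := by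
        rw [← Real.exp_add]; ring_nf; exact Real.exp_zero
      have h5 : v t ≤ Real.exp (-(a * t)) * (v₀ - c * t) := by
        have h6 := mul_le_mul_of_nonneg_left hineq (Real.exp_pos (-(a * t))).le
        rw [mul_add, ← mul_assoc, hE, one_mul] at h6
        have h6' : Real.exp (-(a * t)) * (v₀ - c * t)
            = Real.exp (-(a * t)) * v₀ - Real.exp (-(a * t)) * (c * t) := by ring
        linarith
      have h7 : t⁻¹ * (v t - v₀) ≤ t⁻¹ * (Real.exp (-(a * t)) * (v₀ - c * t) - v₀) := by
        have := mul_le_mul_of_nonneg_left (sub_le_sub_right h5 v₀) (inv_nonneg.mpr ht'.le)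
        exact this
      refine h7.trans (le_of_eq ?_)
      have htne : t ≠ 0 := ht'.ne'
      simp only [hG]
      field_simp
      ring
    calc L ≤ Filter.liminf u (Filter.map m (𝓝[>] (0 : ℝ))) :=
          Filter.liminf_le_liminf_of_le hmt
      _ = Filter.liminf (u ∘ m) (𝓝[>] (0 : ℝ)) := liminf_map_comp m _ u
      _ ≤ Filter.liminf (fun t : ℝ => ((G t : ℝ) : EReal)) (𝓝[>] (0 : ℝ)) :=
          Filter.liminf_le_liminf hub
      _ = ((-(a * v₀) - c : ℝ) : EReal) := by
          refine Filter.Tendsto.liminf_eq ?_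
          exact (continuous_coe_real_ereal.tendsto _).comp hGlim
  -- Part 1
  have part1 : L ≤ -((a : EReal) * V x₀) - ((W x₀ : ℝ≥0∞) : EReal) := by
    have hRH : -((a : EReal) * V x₀) = ((-(a * v₀) : ℝ) : EReal) := by
      rw [hv₀, ← EReal.coe_mul, ← EReal.coe_neg]
    rw [hRH]
    rcases eq_or_ne (W x₀) ⊤ with hWtop | hWtop
    · have hbotR : ((-(a * v₀) : ℝ) : EReal) - ((W x₀ : ℝ≥0∞) : EReal) = ⊥ := by
        rw [hWtop, EReal.coe_ennreal_top, sub_eq_add_neg, EReal.neg_top, EReal.add_bot]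
      rw [hbotR]
      by_contra hcon
      have hbotlt : (⊥ : EReal) < L := lt_of_not_ge hcon
      obtain ⟨r, _, hr2⟩ := EReal.exists_between_coe_real hbotlt
      have hk := key (-(a * v₀) - r + 1) (Or.inr (by rw [hWtop]; exact ENNReal.ofReal_lt_top))
      have : L ≤ ((r - 1 : ℝ) : EReal) := by
        convert hk using 2
        ring
      exact absurd (hr2.trans_le this) (by exact_mod_cast (by linarith : ¬ (r : ℝ) < r - 1))
    · have hWR : ((W x₀ : ℝ≥0∞) : EReal) = (((W x₀).toReal : ℝ) : EReal) := by
        conv_lhs => rw [← ENNReal.ofReal_toReal hWtop]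
        rw [EReal.coe_ennreal_ofReal, max_eq_left ENNReal.toReal_nonneg]
      rw [hWR, ← EReal.coe_sub]
      refine le_of_forall_gt_imp_ge_of_dense fun z hz => ?_
      obtain ⟨r, hr1, hr2⟩ := EReal.exists_between_coe_real hz
      set c := -(a * v₀) - r with hcdef
      have hcr : -(a * v₀) - c = r := by rw [hcdef]; ring
      have hcw : c < (W x₀).toReal := by
        rw [EReal.coe_lt_coe_iff] at hr1
        rw [hcdef]; linarith
      have hP : c ≤ 0 ∨ ENNReal.ofReal c < W x₀ := by
        rcases le_or_gt c 0 with h | h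
        · exact Or.inl h
        · exact Or.inr ((ENNReal.ofReal_lt_iff_lt_toReal h.le hWtop).mpr hcw)
      have := key c hP
      rw [hcr] at this
      exact this.trans hr2.le
  refine ⟨part1, ?_⟩
  -- Part 2: support function of the Fréchet subdifferential is below the contingent derivative
  have part2 : ∀ ξ ∈ frechetSubdiffE V x₀, ((⟪ξ, d⟫ : ℝ) : EReal) ≤ L := by
    intro ξ hξ
    have hεbound : ∀ ε : ℝ, 0 < ε → ((⟪ξ, d⟫ - ε * ‖d‖ : ℝ) : EReal) ≤ L := by
      intro ε hε
      obtain ⟨δ, hδ, hsub⟩ := hξ ε hε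
      have hδ' : 0 < δ / (‖d‖ + 1) := div_pos hδ (by positivity)
      have h1 : ∀ᶠ t in 𝓝[>] (0 : ℝ), t ∈ Set.Ioo 0 (δ / (‖d‖ + 1)) :=
        Ioo_mem_nhdsGT_of_mem ⟨le_refl _, hδ'⟩
      have h2 : ∀ᶠ w in 𝓝 d, ‖w‖ < ‖d‖ + 1 :=
        (continuous_norm.tendsto d).eventually (gt_mem_nhds (lt_add_one ‖d‖))
      have hev : ∀ᶠ p in (𝓝[>] (0 : ℝ)) ×ˢ 𝓝 d,
          ((⟪ξ, p.2⟫ - ε * ‖p.2‖ : ℝ) : EReal) ≤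
            ((p.1⁻¹ : ℝ) : EReal) * (V (x₀ + p.1 • p.2) - V x₀) := by
        filter_upwards [h1.prod_mk h2] with p hp
        obtain ⟨hp1, hp2⟩ := hp
        have ht : 0 < p.1 := hp1.1
        have hnorm : ‖p.1 • p.2‖ ≤ δ := by
          rw [norm_smul, Real.norm_eq_abs, abs_of_pos ht]
          have h9 : p.1 * (‖d‖ + 1) < δ := by
            have h10 := hp1.2
            rw [lt_div_iff₀ (by positivity : (0:ℝ) < ‖d‖ + 1)] at h10
            exact h10
          nlinarith [norm_nonneg p.2]
        have hsub' := hsub (x₀ + p.1 • p.2) (by simpa [add_sub_cancel_left] using hnorm)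
        simp only [add_sub_cancel_left] at hsub'
        rw [hv₀] at hsub' ⊢
        rcases eq_or_ne (V (x₀ + p.1 • p.2)) ⊤ with hT | hT
        · rw [hT, EReal.top_sub_coe, EReal.coe_mul_top_of_pos (inv_pos.mpr ht)]
          exact le_top
        · have hB := hbot (x₀ + p.1 • p.2)
          rw [← EReal.coe_toReal hT hB] at hsub' ⊢
          set u' := (V (x₀ + p.1 • p.2)).toReal
          rw [← EReal.coe_add, EReal.coe_le_coe_iff] at hsub'
          rw [← EReal.coe_sub, ← EReal.coe_mul, EReal.coe_le_coe_iff]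
          rw [real_inner_smul_right, norm_smul, Real.norm_eq_abs, abs_of_pos ht] at hsub'
          have h8 : p.1 * (⟪ξ, p.2⟫ - ε * ‖p.2‖) ≤ u' - v₀ := by nlinarith
          rw [inv_mul_eq_div, le_div_iff₀ ht]
          nlinarith
      have hlow : Filter.liminf (fun p : ℝ × EuclideanSpace ℝ (Fin n) =>
          ((⟪ξ, p.2⟫ - ε * ‖p.2‖ : ℝ) : EReal)) ((𝓝[>] (0 : ℝ)) ×ˢ 𝓝 d)
          = ((⟪ξ, d⟫ - ε * ‖d‖ : ℝ) : EReal) := by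
        refine Filter.Tendsto.liminf_eq ?_
        refine (continuous_coe_real_ereal.tendsto _).comp ?_
        have hcont : Continuous fun w : EuclideanSpace ℝ (Fin n) => ⟪ξ, w⟫ - ε * ‖w‖ := by
          exact (continuous_const.inner continuous_id).sub
            (continuous_const.mul continuous_norm)
        exact (hcont.tendsto d).comp tendsto_snd
      rw [← hlow]
      exact Filter.liminf_le_liminf hev
    have htend : Tendsto (fun ε : ℝ => ((⟪ξ, d⟫ - ε * ‖d‖ : ℝ) : EReal)) (𝓝[>] (0 : ℝ))
        (𝓝 ((⟪ξ, d⟫ : ℝ) : EReal)) := by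
      refine ((continuous_coe_real_ereal.tendsto _).comp ?_).mono_left nhdsWithin_le_nhds
      have : Tendsto (fun ε : ℝ => ⟪ξ, d⟫ - ε * ‖d‖) (𝓝 0) (𝓝 (⟪ξ, d⟫ - 0 * ‖d‖)) := by
        exact (tendsto_const_nhds.sub ((continuous_id.mul continuous_const).tendsto 0))
      simpa using this
    refine le_of_tendsto htend ?_
    filter_upwards [self_mem_nhdsWithin] with ε hε using hεbound ε hε
  exact iSup₂_le fun ξ hξ => (part2 ξ hξ).trans part1
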